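/- Let α, β₁, β₂ > 0 with α ≥ β₂ and let f(z) = ₁F₂(α; β₁, β₂; z) = Σ_{k≥0} (α)_k z^k / ((β₁)_k (β₂)_k k!). Then for all z > 0, [₁F₂(α; β₁, β₂; z)]^{β₁} ≤ [₁F₂(α; β₁+1, β₂; z)]^{β₁+1}. -/

import Mathlib

open Finset Finset.Nat

private lemma binom_sq_identity (M : ℕ) :
    ∑ j ∈ range (M+1), (M.choose j : ℝ) * ((M:ℝ) - 2*j)^2 = (M:ℝ) * 2^M := by
  induction M with
  | zero => simp
  | succ M ih =>
    have hchoose : ∑ j ∈ range (M+1), (M.choose j : ℝ) = 2^M := by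
      have h := Nat.sum_range_choose M
      have h2 : ((∑ m ∈ range (M+1), M.choose m : ℕ) : ℝ) = ((2^M : ℕ) : ℝ) := by rw [h]
      push_cast at h2
      exact h2
    have e1 : ∑ j ∈ range (M+1+1), (((M+1).choose j : ℕ) : ℝ) * (((M+1:ℕ):ℝ) - 2*(j:ℕ))^2
        = (∑ j ∈ range (M+1), (((M+1).choose (j+1) : ℕ) : ℝ) * (((M+1:ℕ):ℝ) - 2*((j+1:ℕ):ℕ))^2)
          + (((M+1:ℕ):ℝ) - 0)^2 := by
      rw [Finset.sum_range_succ']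
      simp
    have peel : ∑ j ∈ range (M+1+1), (M.choose j : ℝ) * (((M+1:ℕ):ℝ) - 2*(j:ℕ))^2
        = (∑ j ∈ range (M+1), (M.choose (j+1) : ℝ) * (((M+1:ℕ):ℝ) - 2*((j+1:ℕ):ℕ))^2)
          + (((M+1:ℕ):ℝ) - 0)^2 := by
      rw [Finset.sum_range_succ']
      simp
    have last : ∑ j ∈ range (M+1+1), (M.choose j : ℝ) * (((M+1:ℕ):ℝ) - 2*(j:ℕ))^2
        = ∑ j ∈ range (M+1), (M.choose j : ℝ) * (((M+1:ℕ):ℝ) - 2*(j:ℕ))^2 := by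
      rw [Finset.sum_range_succ, Nat.choose_eq_zero_of_lt (by omega)]
      simp
    have e3 : ∑ j ∈ range (M+1), (M.choose (j+1) : ℝ) * (((M+1:ℕ):ℝ) - 2*((j+1:ℕ):ℕ))^2
        = ∑ j ∈ range (M+1), (M.choose j : ℝ) * (((M+1:ℕ):ℝ) - 2*(j:ℕ))^2
          - (((M+1:ℕ):ℝ) - 0)^2 := by
      rw [last] at peel; linarith
    have e2 : ∑ j ∈ range (M+1), (((M+1).choose (j+1) : ℕ) : ℝ) * (((M+1:ℕ):ℝ) - 2*((j+1:ℕ):ℕ))^2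
        = (∑ j ∈ range (M+1), (M.choose j : ℝ) * (((M+1:ℕ):ℝ) - 2*((j+1:ℕ):ℕ))^2)
          + (∑ j ∈ range (M+1), (M.choose (j+1) : ℝ) * (((M+1:ℕ):ℝ) - 2*((j+1:ℕ):ℕ))^2) := by
      rw [← Finset.sum_add_distrib]
      refine Finset.sum_congr rfl fun j _ => ?_
      rw [Nat.choose_succ_succ]
      push_cast
      ring
    have e5 : (∑ j ∈ range (M+1), (M.choose j : ℝ) * (((M+1:ℕ):ℝ) - 2*((j+1:ℕ):ℕ))^2)
          + (∑ j ∈ range (M+1), (M.choose j : ℝ) * (((M+1:ℕ):ℝ) - 2*(j:ℕ))^2)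
        = 2 * (∑ j ∈ range (M+1), (M.choose j : ℝ) * ((M:ℝ) - 2*(j:ℕ))^2)
          + 2 * (∑ j ∈ range (M+1), (M.choose j : ℝ)) := by
      rw [← Finset.sum_add_distrib, Finset.mul_sum, Finset.mul_sum, ← Finset.sum_add_distrib]
      refine Finset.sum_congr rfl fun j _ => ?_
      push_cast
      ring
    rw [e1, e2, e3]
    rw [ih] at e5
    rw [hchoose] at e5
    have : (((M+1:ℕ)):ℝ) * 2^(M+1) = 2 * ((M:ℝ) * 2^M) + 2 * 2^M := by push_cast; ring
    linarith


noncomputable def lazPk (x : ℝ) (k : ℕ) : ℝ := ∏ i ∈ Finset.range k, (x + i)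

lemma lazPk_pos {x : ℝ} (hx : 0 < x) (k : ℕ) : 0 < lazPk x k :=
  Finset.prod_pos fun i _ => by positivity

lemma lazPk_succ (x : ℝ) (k : ℕ) : lazPk x (k+1) = lazPk x k * (x + k) :=
  Finset.prod_range_succ _ _

/-- numerator coefficient without factorial -/
noncomputable def lazC (α γ β₂ : ℝ) (k : ℕ) : ℝ := lazPk α k / (lazPk γ k * lazPk β₂ k)

/-- ratio -/
noncomputable def lazR (α γ β₂ : ℝ) (i : ℕ) : ℝ := (α + i) / ((γ + i) * (β₂ + i))

section Core
variable {α γ β₂ : ℝ} (hα : 0 < α) (hγ : 0 < γ) (hβ₂ : 0 < β₂) (hαβ : β₂ ≤ α)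

include hα hγ hβ₂ in
lemma lazC_pos (k : ℕ) : 0 < lazC α γ β₂ k := by
  unfold lazC
  have := lazPk_pos hα k; have := lazPk_pos hγ k; have := lazPk_pos hβ₂ k
  positivity

include hα hγ hβ₂ in
lemma lazR_pos (i : ℕ) : 0 < lazR α γ β₂ i := by
  unfold lazR
  have i0 : (0:ℝ) ≤ i := Nat.cast_nonneg i
  positivity

lemma lazC_succ (k : ℕ) : lazC α γ β₂ (k+1) = lazC α γ β₂ k * lazR α γ β₂ k := by
  unfold lazC lazR
  rw [lazPk_succ, lazPk_succ, lazPk_succ]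
  field_simp

include hα hγ hβ₂ hαβ in
lemma lazR_anti : Antitone (lazR α γ β₂) := by
  apply antitone_nat_of_succ_le
  intro i
  unfold lazR
  have i0 : (0:ℝ) ≤ i := Nat.cast_nonneg i
  rw [div_le_div_iff₀ (by positivity) (by positivity)]
  push_cast
  nlinarith [mul_pos hγ hβ₂]

/-- symmetric product -/
noncomputable def lazD (α γ β₂ : ℝ) (M j : ℕ) : ℝ := lazC α γ β₂ j * lazC α γ β₂ (M - j)

include hα hγ hβ₂ hαβ in
lemma lazD_step {M e : ℕ} (h : 2*e + 1 ≤ M) :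
    lazD α γ β₂ M e ≤ lazD α γ β₂ M (e+1) := by
  have h1 : M - e = (M - (e+1)) + 1 := by omega
  unfold lazD
  rw [h1, lazC_succ, lazC_succ]
  have hr : lazR α γ β₂ (M - (e+1)) ≤ lazR α γ β₂ e := lazR_anti hα hγ hβ₂ hαβ (by omega)
  have c1 : 0 < lazC α γ β₂ e := lazC_pos hα hγ hβ₂ e
  have c2 : 0 < lazC α γ β₂ (M - (e+1)) := lazC_pos hα hγ hβ₂ _
  nlinarith [mul_le_mul_of_nonneg_left hr (mul_pos c1 c2).le]

include hα hγ hβ₂ hαβ in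
lemma lazD_mono {M u : ℕ} : ∀ {v : ℕ}, u ≤ v → 2*v ≤ M →
    lazD α γ β₂ M u ≤ lazD α γ β₂ M v := by
  intro v
  induction v with
  | zero =>
    intro huv _
    have : u = 0 := Nat.le_zero.mp huv
    subst this; exact le_rfl
  | succ w ih =>
    intro huv hv
    rcases Nat.lt_or_ge u (w+1) with h | h
    · have h2 : lazD α γ β₂ M u ≤ lazD α γ β₂ M w := ih (by omega) (by omega)
      exact h2.trans (lazD_step hα hγ hβ₂ hαβ (by omega))
    · have : u = w + 1 := by omega
      subst this; exact le_rfl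

lemma lazD_symm {M j : ℕ} (hj : j ≤ M) : lazD α γ β₂ M j = lazD α γ β₂ M (M - j) := by
  unfold lazD
  rw [Nat.sub_sub_self hj, mul_comm]

include hα hγ hβ₂ hαβ in
lemma lazD_compare {M j k : ℕ} (hj : j ≤ M) (hk : k ≤ M)
    (hφj : (M:ℝ) < ((M:ℝ) - 2*j)^2) (hφk : ((M:ℝ) - 2*k)^2 ≤ M) :
    lazD α γ β₂ M j ≤ lazD α γ β₂ M k := by
  set u := min j (M - j) with hu
  set v := min k (M - k) with hv
  have h2u : 2*u ≤ M := by omega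
  have h2v : 2*v ≤ M := by omega
  have hdj : lazD α γ β₂ M j = lazD α γ β₂ M u := by
    rcases le_total j (M - j) with h | h
    · rw [hu, min_eq_left h]
    · rw [hu, min_eq_right h, ← lazD_symm hj]
  have hdk : lazD α γ β₂ M k = lazD α γ β₂ M v := by
    rcases le_total k (M - k) with h | h
    · rw [hv, min_eq_left h]
    · rw [hv, min_eq_right h, ← lazD_symm hk]
  have hsqj : ((M:ℝ) - 2*j)^2 = ((M:ℝ) - 2*u)^2 := by
    rcases le_total j (M - j) with h | h
    · rw [hu, min_eq_left h]
    · rw [hu, min_eq_right h]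
      have : ((M - j : ℕ) : ℝ) = (M:ℝ) - j := by
        rw [Nat.cast_sub hj]
      rw [this]; ring
  have hsqk : ((M:ℝ) - 2*k)^2 = ((M:ℝ) - 2*v)^2 := by
    rcases le_total k (M - k) with h | h
    · rw [hv, min_eq_left h]
    · rw [hv, min_eq_right h]
      have : ((M - k : ℕ) : ℝ) = (M:ℝ) - k := by
        rw [Nat.cast_sub hk]
      rw [this]; ring
  rw [hsqj] at hφj
  rw [hsqk] at hφk
  have hunn : (0:ℝ) ≤ (M:ℝ) - 2*u := by
    have : ((2*u : ℕ):ℝ) ≤ (M:ℝ) := Nat.cast_le.mpr h2u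
    push_cast at this; linarith
  have hvnn : (0:ℝ) ≤ (M:ℝ) - 2*v := by
    have : ((2*v : ℕ):ℝ) ≤ (M:ℝ) := Nat.cast_le.mpr h2v
    push_cast at this; linarith
  have huv : u < v := by
    by_contra hcon
    push_neg at hcon
    have : (M:ℝ) - 2*u ≤ (M:ℝ) - 2*v := by
      have : (u:ℝ) ≥ v := by exact_mod_cast hcon
      linarith
    nlinarith
  rw [hdj, hdk]
  exact lazD_mono hα hγ hβ₂ hαβ (le_of_lt huv) h2v

end Core

noncomputable def lazB (α γ β₂ : ℝ) (k : ℕ) : ℝ := lazC α γ β₂ k / (k.factorial : ℝ)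

section Core2
variable {α γ β₂ : ℝ} (hα : 0 < α) (hγ : 0 < γ) (hβ₂ : 0 < β₂) (hαβ : β₂ ≤ α)

include hα hγ hβ₂ hαβ in
lemma laz_core_sum (M : ℕ) :
    ∑ j ∈ range (M+1), (((M:ℝ) - 2*j)^2 - (M:ℝ)) * (lazB α γ β₂ j * lazB α γ β₂ (M-j)) ≤ 0 := by
  rcases Nat.eq_zero_or_pos M with rfl | hM
  · simp
  have hfac : (0:ℝ) < (M.factorial : ℝ) := by
    exact_mod_cast Nat.factorial_pos M
  have hchoose : ∑ j ∈ range (M+1), (M.choose j : ℝ) = 2^M := by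
    have h := Nat.sum_range_choose M
    have h2 : ((∑ m ∈ range (M+1), M.choose m : ℕ) : ℝ) = ((2^M : ℕ) : ℝ) := by rw [h]
    push_cast at h2; exact h2
  have hzero : ∑ j ∈ range (M+1), (M.choose j:ℝ) * (((M:ℝ)-2*j)^2 - (M:ℝ)) = 0 := by
    have : ∑ j ∈ range (M+1), (M.choose j:ℝ) * (((M:ℝ)-2*j)^2 - (M:ℝ))
        = (∑ j ∈ range (M+1), (M.choose j:ℝ) * ((M:ℝ)-2*j)^2)
          - (M:ℝ) * ∑ j ∈ range (M+1), (M.choose j:ℝ) := by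
      rw [Finset.mul_sum, ← Finset.sum_sub_distrib]
      exact Finset.sum_congr rfl fun j _ => by ring
    rw [this, binom_sq_identity, hchoose]
    ring
  -- the minimizing index
  set T := (range (M+1)).filter (fun j : ℕ => ((M:ℝ)-2*(j:ℝ))^2 ≤ (M:ℝ)) with hTdef
  have hTne : T.Nonempty := by
    refine ⟨M/2, ?_⟩
    rw [hTdef, Finset.mem_filter]
    constructor
    · exact Finset.mem_range.mpr (by omega)
    · have hmod : (M:ℝ) - 2*((M/2 : ℕ):ℝ) = ((M % 2 : ℕ):ℝ) := by
        have h := Nat.div_add_mod M 2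
        have : ((2*(M/2) + M % 2 : ℕ):ℝ) = (M:ℝ) := by rw [h]
        push_cast at this; linarith
      rw [hmod]
      have h1 : (M % 2 : ℕ) ≤ 1 := by omega
      have h1' : ((M % 2 : ℕ):ℝ) ≤ 1 := by exact_mod_cast h1
      have h2 : (1:ℝ) ≤ (M:ℝ) := by exact_mod_cast hM
      nlinarith [Nat.cast_nonneg (α := ℝ) (M % 2)]
  obtain ⟨j0, hj0T, hj0min⟩ := T.exists_min_image (fun j => lazD α γ β₂ M j) hTne
  have hj0le : j0 ≤ M := by
    have := (Finset.mem_filter.mp hj0T).1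
    exact Nat.lt_succ_iff.mp (Finset.mem_range.mp this)
  have hj0φ : ((M:ℝ)-2*j0)^2 ≤ (M:ℝ) := (Finset.mem_filter.mp hj0T).2
  -- termwise bound
  have hterm : ∀ j ∈ range (M+1),
      (M.choose j : ℝ) * ((((M:ℝ) - 2*j)^2 - (M:ℝ)) * (lazD α γ β₂ M j - lazD α γ β₂ M j0)) ≤ 0 := by
    intro j hj
    have hjle : j ≤ M := Nat.lt_succ_iff.mp (Finset.mem_range.mp hj)
    have hcnn : (0:ℝ) ≤ (M.choose j : ℝ) := Nat.cast_nonneg _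
    rcases le_or_gt (((M:ℝ) - 2*j)^2) (M:ℝ) with h | h
    · have hjT : j ∈ T := by
        rw [hTdef, Finset.mem_filter]; exact ⟨hj, h⟩
      have hd : lazD α γ β₂ M j0 ≤ lazD α γ β₂ M j := hj0min j hjT
      have : (((M:ℝ) - 2*j)^2 - (M:ℝ)) * (lazD α γ β₂ M j - lazD α γ β₂ M j0) ≤ 0 :=
        mul_nonpos_of_nonpos_of_nonneg (by linarith) (by linarith)
      exact mul_nonpos_of_nonneg_of_nonpos hcnn this
    · have hd : lazD α γ β₂ M j ≤ lazD α γ β₂ M j0 :=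
        lazD_compare hα hγ hβ₂ hαβ hjle hj0le h hj0φ
      have : (((M:ℝ) - 2*j)^2 - (M:ℝ)) * (lazD α γ β₂ M j - lazD α γ β₂ M j0) ≤ 0 :=
        mul_nonpos_of_nonneg_of_nonpos (by linarith) (by linarith)
      exact mul_nonpos_of_nonneg_of_nonpos hcnn this
  have key : ∑ j ∈ range (M+1),
      (M.choose j : ℝ) * ((((M:ℝ) - 2*j)^2 - (M:ℝ)) * lazD α γ β₂ M j) ≤ 0 := by
    have split : ∑ j ∈ range (M+1),
        (M.choose j : ℝ) * ((((M:ℝ) - 2*j)^2 - (M:ℝ)) * lazD α γ β₂ M j)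
        = (∑ j ∈ range (M+1),
            (M.choose j : ℝ) * ((((M:ℝ) - 2*j)^2 - (M:ℝ)) * (lazD α γ β₂ M j - lazD α γ β₂ M j0)))
          + lazD α γ β₂ M j0 * ∑ j ∈ range (M+1), (M.choose j:ℝ) * (((M:ℝ)-2*j)^2 - (M:ℝ)) := by
      rw [Finset.mul_sum, ← Finset.sum_add_distrib]
      exact Finset.sum_congr rfl fun j _ => by ring
    rw [split, hzero, mul_zero, add_zero]
    exact Finset.sum_nonpos hterm
  -- convert goal
  have hbd : ∀ j ∈ range (M+1),
      (((M:ℝ) - 2*j)^2 - (M:ℝ)) * (lazB α γ β₂ j * lazB α γ β₂ (M-j))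
      = (M.choose j : ℝ) * ((((M:ℝ) - 2*j)^2 - (M:ℝ)) * lazD α γ β₂ M j) / (M.factorial : ℝ) := by
    intro j hj
    have hjle : j ≤ M := Nat.lt_succ_iff.mp (Finset.mem_range.mp hj)
    have hcf : (M.choose j : ℝ) * (j.factorial : ℝ) * ((M-j).factorial : ℝ) = (M.factorial : ℝ) := by
      have h := Nat.choose_mul_factorial_mul_factorial hjle
      exact_mod_cast congrArg (Nat.cast : ℕ → ℝ) h
    have hjf : (0:ℝ) < (j.factorial : ℝ) := by exact_mod_cast Nat.factorial_pos j
    have hmjf : (0:ℝ) < ((M-j).factorial : ℝ) := by exact_mod_cast Nat.factorial_pos (M-j)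
    unfold lazB lazD
    field_simp
    linear_combination (-((((M:ℝ) - 2*(j:ℝ))^2 - (M:ℝ)) * (lazC α γ β₂ j * lazC α γ β₂ (M-j)))) * hcf
  calc ∑ j ∈ range (M+1), (((M:ℝ) - 2*j)^2 - (M:ℝ)) * (lazB α γ β₂ j * lazB α γ β₂ (M-j))
      = (∑ j ∈ range (M+1),
          (M.choose j : ℝ) * ((((M:ℝ) - 2*j)^2 - (M:ℝ)) * lazD α γ β₂ M j)) / (M.factorial : ℝ) := by
        rw [Finset.sum_div]
        exact Finset.sum_congr rfl hbd
    _ ≤ 0 := div_nonpos_of_nonpos_of_nonneg key hfac.le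

include hα hγ hβ₂ hαβ in
lemma laz_coreM (M : ℕ) :
    ∑ p ∈ antidiagonal M, ((p.2:ℝ)*((p.2:ℝ)-1) - (p.1:ℝ)*(p.2:ℝ))
        * (lazB α γ β₂ p.1 * lazB α γ β₂ p.2) ≤ 0 := by
  set B := lazB α γ β₂ with hB
  have hswap : ∑ p ∈ antidiagonal M, ((p.2:ℝ)*((p.2:ℝ)-1) - (p.1:ℝ)*(p.2:ℝ)) * (B p.1 * B p.2)
      = ∑ p ∈ antidiagonal M, ((p.1:ℝ)*((p.1:ℝ)-1) - (p.1:ℝ)*(p.2:ℝ)) * (B p.1 * B p.2) := by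
    rw [← Finset.Nat.sum_antidiagonal_swap
      (f := fun p => ((p.2:ℝ)*((p.2:ℝ)-1) - (p.1:ℝ)*(p.2:ℝ)) * (B p.1 * B p.2))]
    exact Finset.sum_congr rfl fun p _ => by simp [Prod.swap]; ring
  have hsum : (∑ p ∈ antidiagonal M, ((p.2:ℝ)*((p.2:ℝ)-1) - (p.1:ℝ)*(p.2:ℝ)) * (B p.1 * B p.2))
      + (∑ p ∈ antidiagonal M, ((p.1:ℝ)*((p.1:ℝ)-1) - (p.1:ℝ)*(p.2:ℝ)) * (B p.1 * B p.2))
      = ∑ p ∈ antidiagonal M, (((p.2:ℝ) - (p.1:ℝ))^2 - (M:ℝ)) * (B p.1 * B p.2) := by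
    rw [← Finset.sum_add_distrib]
    refine Finset.sum_congr rfl fun p hp => ?_
    have hpm : p.1 + p.2 = M := Finset.HasAntidiagonal.mem_antidiagonal.mp hp
    have hcast : (p.1:ℝ) + (p.2:ℝ) = (M:ℝ) := by exact_mod_cast congrArg (Nat.cast : ℕ → ℝ) hpm
    linear_combination (-(B p.1 * B p.2)) * hcast
  have hrange : ∑ p ∈ antidiagonal M, (((p.2:ℝ) - (p.1:ℝ))^2 - (M:ℝ)) * (B p.1 * B p.2)
      = ∑ j ∈ range (M+1), (((M:ℝ) - 2*j)^2 - (M:ℝ)) * (B j * B (M-j)) := by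
    rw [Finset.Nat.sum_antidiagonal_eq_sum_range_succ_mk]
    refine Finset.sum_congr rfl fun j hj => ?_
    have hjle : j ≤ M := Nat.lt_succ_iff.mp (Finset.mem_range.mp hj)
    have : ((M - j : ℕ):ℝ) = (M:ℝ) - (j:ℝ) := by rw [Nat.cast_sub hjle]
    simp only [this]
    ring
  have hcore := laz_core_sum hα hγ hβ₂ hαβ M
  rw [← hrange] at hcore
  linarith
-- the shifted key coefficient inequality
include hα hγ hβ₂ hαβ in
lemma laz_key_coeff (N : ℕ) :
    ∑ p ∈ antidiagonal N, lazB α γ β₂ p.1 * (((p.2:ℝ)+2)*((p.2:ℝ)+1)* lazB α γ β₂ (p.2+2))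
      ≤ ∑ p ∈ antidiagonal N, (((p.1:ℝ)+1)* lazB α γ β₂ (p.1+1))
          * (((p.2:ℝ)+1)* lazB α γ β₂ (p.2+1)) := by
  set B := lazB α γ β₂ with hB
  set L : ℕ × ℕ → ℝ := fun p => ((p.2:ℝ)*((p.2:ℝ)-1)) * (B p.1 * B p.2) with hL
  set R : ℕ × ℕ → ℝ := fun p => ((p.1:ℝ)*(p.2:ℝ)) * (B p.1 * B p.2) with hR
  have eL : ∑ p ∈ antidiagonal (N+2), L p = ∑ p ∈ antidiagonal N, L (p.1, p.2+2) := by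
    rw [Finset.Nat.sum_antidiagonal_succ' (f := L)]
    rw [Finset.Nat.sum_antidiagonal_succ' (f := fun p => L (p.1, p.2+1))]
    have h1 : L (N+1+1, 0) = 0 := by simp [hL]
    have h2 : L (N+1, 0+1) = 0 := by simp [hL]
    rw [h1, h2]
    simp
  have eR : ∑ p ∈ antidiagonal (N+2), R p = ∑ p ∈ antidiagonal N, R (p.1+1, p.2+1) := by
    rw [Finset.Nat.sum_antidiagonal_succ (f := R)]
    rw [Finset.Nat.sum_antidiagonal_succ' (f := fun p => R (p.1+1, p.2))]
    have h1 : R (0, N+1+1) = 0 := by simp [hR]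
    have h2 : R (N+1+1, 0) = 0 := by simp [hR]
    rw [h1, h2]
    simp
  have hcore := laz_coreM hα hγ hβ₂ hαβ (N+2)
  have hsplit : ∑ p ∈ antidiagonal (N+2),
      ((p.2:ℝ)*((p.2:ℝ)-1) - (p.1:ℝ)*(p.2:ℝ)) * (B p.1 * B p.2)
      = (∑ p ∈ antidiagonal (N+2), L p) - ∑ p ∈ antidiagonal (N+2), R p := by
    rw [← Finset.sum_sub_distrib]
    exact Finset.sum_congr rfl fun p _ => by simp [hL, hR]; ring
  rw [hsplit, eL, eR] at hcore
  have e1 : ∑ p ∈ antidiagonal N, B p.1 * (((p.2:ℝ)+2)*((p.2:ℝ)+1)* B (p.2+2))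
      = ∑ p ∈ antidiagonal N, L (p.1, p.2+2) := by
    refine Finset.sum_congr rfl fun p _ => ?_
    simp only [hL]
    push_cast
    ring
  have e2 : ∑ p ∈ antidiagonal N, (((p.1:ℝ)+1)* B (p.1+1)) * (((p.2:ℝ)+1)* B (p.2+1))
      = ∑ p ∈ antidiagonal N, R (p.1+1, p.2+1) := by
    refine Finset.sum_congr rfl fun p _ => ?_
    simp only [hR]
    push_cast
    ring
  rw [e1, e2]
  linarith

end Core2

noncomputable def lazG (α γ β₂ x : ℝ) : ℝ := ∑' k : ℕ, lazB α γ β₂ k * x^k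
noncomputable def lazG1 (α γ β₂ x : ℝ) : ℝ := ∑' k : ℕ, ((k:ℝ)+1) * lazB α γ β₂ (k+1) * x^k
noncomputable def lazG2 (α γ β₂ x : ℝ) : ℝ :=
  ∑' k : ℕ, ((k:ℝ)+2)*((k:ℝ)+1) * lazB α γ β₂ (k+2) * x^k

section Bounds
variable {α γ β₂ : ℝ} (hα : 0 < α) (hγ : 0 < γ) (hβ₂ : 0 < β₂) (hαβ : β₂ ≤ α) (hγ1 : 1 ≤ γ)

include hα hγ hβ₂ in
lemma lazB_pos (k : ℕ) : 0 < lazB α γ β₂ k := by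
  unfold lazB lazC
  have := lazPk_pos hα k; have := lazPk_pos hγ k; have := lazPk_pos hβ₂ k
  have : (0:ℝ) < (k.factorial : ℝ) := by exact_mod_cast Nat.factorial_pos k
  positivity

include hα hβ₂ hαβ hγ1 in
lemma lazB_le (k : ℕ) : lazB α γ β₂ k ≤ (α/β₂)^k / ((k.factorial : ℝ) * (k.factorial : ℝ)) := by
  have hr1 : 1 ≤ α/β₂ := (one_le_div hβ₂).mpr hαβ
  have hA : lazPk α k ≤ (α/β₂)^k * lazPk β₂ k := by
    unfold lazPk
    rw [show (α/β₂)^k = ∏ _i ∈ range k, (α/β₂) by rw [Finset.prod_const, Finset.card_range],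
      ← Finset.prod_mul_distrib]
    refine Finset.prod_le_prod (fun i _ => by positivity) (fun i _ => ?_)
    have hi : (0:ℝ) ≤ (i:ℝ) := Nat.cast_nonneg i
    rw [div_mul_eq_mul_div, le_div_iff₀ hβ₂]
    nlinarith
  have hB : (k.factorial : ℝ) ≤ lazPk γ k := by
    have : ((k.factorial : ℕ) : ℝ) = ∏ i ∈ range k, ((i:ℝ) + 1) := by
      rw [← Finset.prod_range_add_one_eq_factorial k]
      push_cast
      rfl
    rw [this]
    refine Finset.prod_le_prod (fun i _ => by positivity) (fun i _ => by linarith)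
  have hkf : (0:ℝ) < (k.factorial : ℝ) := by exact_mod_cast Nat.factorial_pos k
  have hpk2 : 0 < lazPk β₂ k := lazPk_pos hβ₂ k
  have hpkγ : 0 < lazPk γ k := lazPk_pos (by linarith) k
  have hpkα : 0 < lazPk α k := lazPk_pos hα k
  unfold lazB lazC
  rw [div_div]
  rw [div_le_div_iff₀ (by positivity) (by positivity)]
  calc lazPk α k * ((k.factorial : ℝ) * (k.factorial : ℝ))
      ≤ ((α/β₂)^k * lazPk β₂ k) * (lazPk γ k * (k.factorial : ℝ)) := by
        have h1 : (0:ℝ) ≤ (k.factorial : ℝ) * (k.factorial : ℝ) := by positivity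
        have := mul_le_mul hA (mul_le_mul_of_nonneg_right hB hkf.le) (by positivity) (by positivity)
        calc lazPk α k * ((k.factorial : ℝ) * (k.factorial : ℝ))
            = lazPk α k * ((k.factorial : ℝ) * (k.factorial : ℝ)) := rfl
          _ ≤ ((α/β₂)^k * lazPk β₂ k) * (lazPk γ k * (k.factorial : ℝ)) := by nlinarith
      _ = (α/β₂)^k * (lazPk γ k * lazPk β₂ k * (k.factorial : ℝ)) := by ring
end Bounds

section Summable
variable {α γ β₂ : ℝ} (hα : 0 < α) (hγ : 0 < γ) (hβ₂ : 0 < β₂) (hαβ : β₂ ≤ α) (hγ1 : 1 ≤ γ)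

include hα hγ hβ₂ hαβ hγ1 in
lemma laz_summable0 (x : ℝ) : Summable (fun k => ‖lazB α γ β₂ k * x^k‖) := by
  have hr : 0 < α/β₂ := div_pos hα hβ₂
  refine Summable.of_nonneg_of_le (fun k => norm_nonneg _)
    (fun k => ?_) (Real.summable_pow_div_factorial ((α/β₂) * |x|))
  have hb := lazB_le hα hβ₂ hαβ hγ1 (γ := γ) k
  have hbp := lazB_pos hα hγ hβ₂ k
  have hkf : (1:ℝ) ≤ (k.factorial : ℝ) := by exact_mod_cast Nat.factorial_pos k
  have : ‖lazB α γ β₂ k * x^k‖ = lazB α γ β₂ k * |x|^k := by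
    rw [norm_mul, Real.norm_eq_abs, Real.norm_eq_abs, abs_of_pos hbp, abs_pow]
  rw [this, mul_pow ((α/β₂)) |x| k]
  have h1 : lazB α γ β₂ k ≤ (α/β₂)^k / (k.factorial : ℝ) := by
    refine hb.trans ?_
    apply div_le_div_of_nonneg_left (by positivity) (by positivity)
    nlinarith
  calc lazB α γ β₂ k * |x|^k ≤ ((α/β₂)^k / (k.factorial : ℝ)) * |x|^k := by
        exact mul_le_mul_of_nonneg_right h1 (by positivity)
    _ = (α/β₂)^k * |x|^k / (k.factorial : ℝ) := by ring

include hα hγ hβ₂ hαβ hγ1 in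
lemma laz_summable1 (x : ℝ) :
    Summable (fun k : ℕ => ‖((k:ℝ)+1) * lazB α γ β₂ (k+1) * x^k‖) := by
  have hr : 0 < α/β₂ := div_pos hα hβ₂
  refine Summable.of_nonneg_of_le (fun k => norm_nonneg _) (fun k => ?_)
    ((Real.summable_pow_div_factorial ((α/β₂) * |x|)).mul_left (α/β₂))
  have hb := lazB_le hα hβ₂ hαβ hγ1 (γ := γ) (k+1)
  have hbp := lazB_pos hα hγ hβ₂ (k+1)
  have hkf : (1:ℝ) ≤ (k.factorial : ℝ) := by exact_mod_cast Nat.factorial_pos k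
  have hk1f : ((k+1).factorial : ℝ) = ((k:ℝ)+1) * (k.factorial : ℝ) := by
    rw [Nat.factorial_succ]; push_cast; ring
  have heq : ‖((k:ℝ)+1) * lazB α γ β₂ (k+1) * x^k‖ = ((k:ℝ)+1) * lazB α γ β₂ (k+1) * |x|^k := by
    rw [norm_mul, norm_mul, Real.norm_eq_abs, Real.norm_eq_abs, Real.norm_eq_abs,
      abs_of_pos hbp, abs_pow, abs_of_nonneg (by positivity : (0:ℝ) ≤ (k:ℝ)+1)]
  rw [heq]
  have h1 : ((k:ℝ)+1) * lazB α γ β₂ (k+1) ≤ (α/β₂) * ((α/β₂)^k / (k.factorial : ℝ)) := by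
    have h2 : ((k:ℝ)+1) * lazB α γ β₂ (k+1)
        ≤ ((k:ℝ)+1) * ((α/β₂)^(k+1) / (((k+1).factorial : ℝ) * ((k+1).factorial : ℝ))) :=
      mul_le_mul_of_nonneg_left hb (by positivity)
    refine h2.trans ?_
    rw [hk1f, pow_succ]
    have hkfp : (0:ℝ) < (k.factorial:ℝ) := by linarith
    have e1 : ((k:ℝ)+1) * ((α/β₂)^k*(α/β₂) / ((((k:ℝ)+1)*(k.factorial:ℝ)) * (((k:ℝ)+1)*(k.factorial:ℝ))))
        = (α/β₂)*((α/β₂)^k / (((k:ℝ)+1)*((k.factorial:ℝ)*(k.factorial:ℝ)))) := by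
      field_simp
    rw [e1]
    have hD : (k.factorial:ℝ) ≤ ((k:ℝ)+1)*((k.factorial:ℝ)*(k.factorial:ℝ)) := by nlinarith
    gcongr
  calc ((k:ℝ)+1) * lazB α γ β₂ (k+1) * |x|^k
      ≤ ((α/β₂) * ((α/β₂)^k / (k.factorial : ℝ))) * |x|^k :=
        mul_le_mul_of_nonneg_right h1 (by positivity)
    _ = (α/β₂) * (((α/β₂)*|x|)^k / (k.factorial : ℝ)) := by rw [mul_pow]; ring
end Summable

section Summable2
variable {α γ β₂ : ℝ} (hα : 0 < α) (hγ : 0 < γ) (hβ₂ : 0 < β₂) (hαβ : β₂ ≤ α) (hγ1 : 1 ≤ γ)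

include hα hγ hβ₂ hαβ hγ1 in
lemma laz_summable2 (x : ℝ) :
    Summable (fun k : ℕ => ‖((k:ℝ)+2)*((k:ℝ)+1) * lazB α γ β₂ (k+2) * x^k‖) := by
  have hr : 0 < α/β₂ := div_pos hα hβ₂
  refine Summable.of_nonneg_of_le (fun k => norm_nonneg _) (fun k => ?_)
    ((Real.summable_pow_div_factorial ((α/β₂) * |x|)).mul_left ((α/β₂)*(α/β₂)))
  have hb := lazB_le hα hβ₂ hαβ hγ1 (γ := γ) (k+2)
  have hbp := lazB_pos hα hγ hβ₂ (k+2)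
  have hkf : (1:ℝ) ≤ (k.factorial : ℝ) := by exact_mod_cast Nat.factorial_pos k
  have hkfp : (0:ℝ) < (k.factorial:ℝ) := by linarith
  have hk2f : ((k+2).factorial : ℝ) = ((k:ℝ)+2) * (((k:ℝ)+1) * (k.factorial : ℝ)) := by
    rw [Nat.factorial_succ, Nat.factorial_succ]; push_cast; ring
  have heq : ‖((k:ℝ)+2)*((k:ℝ)+1) * lazB α γ β₂ (k+2) * x^k‖
      = ((k:ℝ)+2)*((k:ℝ)+1) * lazB α γ β₂ (k+2) * |x|^k := by
    rw [norm_mul, norm_mul, norm_mul, Real.norm_eq_abs, Real.norm_eq_abs, Real.norm_eq_abs,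
      Real.norm_eq_abs, abs_of_pos hbp, abs_pow,
      abs_of_nonneg (by positivity : (0:ℝ) ≤ (k:ℝ)+2),
      abs_of_nonneg (by positivity : (0:ℝ) ≤ (k:ℝ)+1)]
  rw [heq, mul_pow ((α/β₂)) |x| k]
  have h1 : ((k:ℝ)+2)*((k:ℝ)+1) * lazB α γ β₂ (k+2)
      ≤ (α/β₂)*(α/β₂) * ((α/β₂)^k / (k.factorial : ℝ)) := by
    have h2 : ((k:ℝ)+2)*((k:ℝ)+1) * lazB α γ β₂ (k+2)
        ≤ ((k:ℝ)+2)*((k:ℝ)+1) * ((α/β₂)^(k+2) / (((k+2).factorial : ℝ) * ((k+2).factorial : ℝ))) :=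
      mul_le_mul_of_nonneg_left hb (by positivity)
    refine h2.trans ?_
    rw [hk2f, pow_succ, pow_succ]
    have e1 : ((k:ℝ)+2)*((k:ℝ)+1) * ((α/β₂)^k*(α/β₂)*(α/β₂) /
          ((((k:ℝ)+2)*(((k:ℝ)+1)*(k.factorial:ℝ))) * (((k:ℝ)+2)*(((k:ℝ)+1)*(k.factorial:ℝ)))))
        = (α/β₂)*(α/β₂)*((α/β₂)^k /
            (((k:ℝ)+2)*(((k:ℝ)+1)*((k.factorial:ℝ)*(k.factorial:ℝ))))) := by
      field_simp
    rw [e1]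
    have hknn : (0:ℝ) ≤ (k:ℝ) := Nat.cast_nonneg k
    have hD : (k.factorial:ℝ) ≤ ((k:ℝ)+2)*(((k:ℝ)+1)*((k.factorial:ℝ)*(k.factorial:ℝ))) := by
      have h3 : (k.factorial:ℝ) ≤ (k.factorial:ℝ)*(k.factorial:ℝ) := by nlinarith
      have h4 : (1:ℝ) ≤ ((k:ℝ)+2)*((k:ℝ)+1) := by nlinarith
      nlinarith [mul_le_mul h4 h3 hkfp.le (by nlinarith : (0:ℝ) ≤ ((k:ℝ)+2)*((k:ℝ)+1))]
    gcongr
  calc ((k:ℝ)+2)*((k:ℝ)+1) * lazB α γ β₂ (k+2) * |x|^k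
      ≤ ((α/β₂)*(α/β₂) * ((α/β₂)^k / (k.factorial : ℝ))) * |x|^k :=
        mul_le_mul_of_nonneg_right h1 (by positivity)
    _ = (α/β₂)*(α/β₂) * ((α/β₂)^k * |x|^k / (k.factorial : ℝ)) := by ring
end Summable2

section Deriv
variable {α γ β₂ : ℝ} (hα : 0 < α) (hγ : 0 < γ) (hβ₂ : 0 < β₂) (hαβ : β₂ ≤ α) (hγ1 : 1 ≤ γ)

include hα hγ hβ₂ hαβ hγ1 in
lemma laz_summable_shift (x : ℝ) :
    Summable (fun n : ℕ => (n:ℝ) * lazB α γ β₂ n * x^(n-1)) := by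
  rw [← summable_nat_add_iff 1]
  refine ((laz_summable1 hα hγ hβ₂ hαβ hγ1 x).of_norm).congr (fun n => ?_)
  push_cast [Nat.add_sub_cancel]
  ring

include hα hγ hβ₂ hαβ hγ1 in
lemma lazG_hasDeriv (y : ℝ) : HasDerivAt (lazG α γ β₂) (lazG1 α γ β₂ y) y := by
  set R := |y| + 1 with hR
  have hyR : y ∈ Set.Ioo (-R) R := by
    constructor
    · have := neg_abs_le y; simp only [hR]; linarith
    · have := le_abs_self y; simp only [hR]; linarith
  have hu : Summable (fun n : ℕ => (n:ℝ) * lazB α γ β₂ n * R^(n-1)) :=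
    laz_summable_shift hα hγ hβ₂ hαβ hγ1 R
  have hderiv : ∀ (n : ℕ) (x : ℝ), x ∈ Set.Ioo (-R) R →
      HasDerivAt (fun z : ℝ => lazB α γ β₂ n * z^n) (lazB α γ β₂ n * ((n:ℝ) * x^(n-1))) x :=
    fun n x _ => (hasDerivAt_pow n x).const_mul _
  have hbound : ∀ (n : ℕ) (x : ℝ), x ∈ Set.Ioo (-R) R →
      ‖lazB α γ β₂ n * ((n:ℝ) * x^(n-1))‖ ≤ (n:ℝ) * lazB α γ β₂ n * R^(n-1) := by
    intro n x hx
    have hbp := lazB_pos hα hγ hβ₂ n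
    have hxR : |x| ≤ R := by
      rw [abs_le]; exact ⟨hx.1.le, hx.2.le⟩
    have hRnn : (0:ℝ) ≤ R := (abs_nonneg x).trans hxR
    rw [norm_mul, norm_mul, Real.norm_eq_abs, Real.norm_eq_abs, Real.norm_eq_abs,
      abs_of_pos hbp, abs_of_nonneg (Nat.cast_nonneg n), abs_pow]
    calc lazB α γ β₂ n * ((n:ℝ) * |x|^(n-1))
        ≤ lazB α γ β₂ n * ((n:ℝ) * R^(n-1)) := by
          have h5 := pow_le_pow_left₀ (abs_nonneg x) hxR (n-1)
          have hn : (0:ℝ) ≤ (n:ℝ) := Nat.cast_nonneg n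
          exact mul_le_mul_of_nonneg_left (mul_le_mul_of_nonneg_left h5 hn) hbp.le
      _ = (n:ℝ) * lazB α γ β₂ n * R^(n-1) := by ring
  have hg0 : Summable (fun n : ℕ => lazB α γ β₂ n * y^n) :=
    (laz_summable0 hα hγ hβ₂ hαβ hγ1 y).of_norm
  have H := hasDerivAt_tsum_of_isPreconnected hu isOpen_Ioo (convex_Ioo (-R) R).isPreconnected
    hderiv hbound hyR hg0 hyR
  have hfun : lazG α γ β₂ = fun z => ∑' n : ℕ, lazB α γ β₂ n * z^n := rfl
  rw [hfun]
  have hsum : ∑' n : ℕ, lazB α γ β₂ n * ((n:ℝ) * y^(n-1)) = lazG1 α γ β₂ y := by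
    have hs : Summable (fun n : ℕ => lazB α γ β₂ n * ((n:ℝ) * y^(n-1))) := by
      refine (laz_summable_shift hα hγ hβ₂ hαβ hγ1 y).congr (fun n => ?_)
      ring
    rw [Summable.tsum_eq_zero_add hs]
    simp only [Nat.cast_zero, zero_mul, mul_zero, zero_add]
    refine tsum_congr (fun n => ?_)
    push_cast [Nat.add_sub_cancel]
    ring
  rw [← hsum]
  exact H

include hα hγ hβ₂ hαβ hγ1 in
lemma laz_summable_shift2 (x : ℝ) :
    Summable (fun n : ℕ => ((n:ℝ)+1) * lazB α γ β₂ (n+1) * ((n:ℝ) * x^(n-1))) := by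
  rw [← summable_nat_add_iff 1]
  refine ((laz_summable2 hα hγ hβ₂ hαβ hγ1 x).of_norm).congr (fun n => ?_)
  push_cast [Nat.add_sub_cancel]
  ring

include hα hγ hβ₂ hαβ hγ1 in
lemma lazG1_hasDeriv (y : ℝ) : HasDerivAt (lazG1 α γ β₂) (lazG2 α γ β₂ y) y := by
  set R := |y| + 1 with hR
  have hyR : y ∈ Set.Ioo (-R) R := by
    constructor
    · have := neg_abs_le y; simp only [hR]; linarith
    · have := le_abs_self y; simp only [hR]; linarith
  have hRnn : (0:ℝ) ≤ R := by simp only [hR]; positivity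
  have hu : Summable (fun n : ℕ => ((n:ℝ)+1) * lazB α γ β₂ (n+1) * ((n:ℝ) * R^(n-1))) :=
    laz_summable_shift2 hα hγ hβ₂ hαβ hγ1 R
  have hderiv : ∀ (n : ℕ) (x : ℝ), x ∈ Set.Ioo (-R) R →
      HasDerivAt (fun z : ℝ => ((n:ℝ)+1) * lazB α γ β₂ (n+1) * z^n)
        (((n:ℝ)+1) * lazB α γ β₂ (n+1) * ((n:ℝ) * x^(n-1))) x :=
    fun n x _ => (hasDerivAt_pow n x).const_mul _
  have hbound : ∀ (n : ℕ) (x : ℝ), x ∈ Set.Ioo (-R) R →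
      ‖((n:ℝ)+1) * lazB α γ β₂ (n+1) * ((n:ℝ) * x^(n-1))‖
        ≤ ((n:ℝ)+1) * lazB α γ β₂ (n+1) * ((n:ℝ) * R^(n-1)) := by
    intro n x hx
    have hbp := lazB_pos hα hγ hβ₂ (n+1)
    have hxR : |x| ≤ R := by
      rw [abs_le]; exact ⟨hx.1.le, hx.2.le⟩
    simp only [norm_mul, Real.norm_eq_abs, abs_pow]
    rw [abs_of_pos hbp, abs_of_nonneg (Nat.cast_nonneg (α := ℝ) n),
      abs_of_nonneg (by positivity : (0:ℝ) ≤ (n:ℝ)+1)]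
    have h5 := pow_le_pow_left₀ (abs_nonneg x) hxR (n-1)
    have hn : (0:ℝ) ≤ (n:ℝ) := Nat.cast_nonneg n
    have h2 : (0:ℝ) ≤ ((n:ℝ)+1) * lazB α γ β₂ (n+1) := by positivity
    exact mul_le_mul_of_nonneg_left (mul_le_mul_of_nonneg_left h5 hn) h2
  have hg0 : Summable (fun n : ℕ => ((n:ℝ)+1) * lazB α γ β₂ (n+1) * y^n) :=
    (laz_summable1 hα hγ hβ₂ hαβ hγ1 y).of_norm
  have H := hasDerivAt_tsum_of_isPreconnected hu isOpen_Ioo (convex_Ioo (-R) R).isPreconnected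
    hderiv hbound hyR hg0 hyR
  have hfun : lazG1 α γ β₂ = fun z => ∑' n : ℕ, ((n:ℝ)+1) * lazB α γ β₂ (n+1) * z^n := rfl
  rw [hfun]
  have hsum : ∑' n : ℕ, ((n:ℝ)+1) * lazB α γ β₂ (n+1) * ((n:ℝ) * y^(n-1)) = lazG2 α γ β₂ y := by
    have hs : Summable (fun n : ℕ => ((n:ℝ)+1) * lazB α γ β₂ (n+1) * ((n:ℝ) * y^(n-1))) :=
      laz_summable_shift2 hα hγ hβ₂ hαβ hγ1 y
    rw [Summable.tsum_eq_zero_add hs]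
    simp only [Nat.cast_zero, zero_mul, mul_zero, zero_add]
    refine tsum_congr (fun n => ?_)
    push_cast [Nat.add_sub_cancel]
    ring
  rw [← hsum]
  exact H
end Deriv

section Turan
variable {α γ β₂ : ℝ} (hα : 0 < α) (hγ : 0 < γ) (hβ₂ : 0 < β₂) (hαβ : β₂ ≤ α) (hγ1 : 1 ≤ γ)

include hα hγ hβ₂ in
lemma lazG_one_le {x : ℝ} (hαβ : β₂ ≤ α) (hγ1 : 1 ≤ γ) (hx : 0 ≤ x) : 1 ≤ lazG α γ β₂ x := by
  have h0 : lazB α γ β₂ 0 * x^0 = 1 := by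
    simp [lazB, lazC, lazPk]
  calc (1:ℝ) = lazB α γ β₂ 0 * x^0 := h0.symm
    _ ≤ lazG α γ β₂ x := by
      exact Summable.le_tsum ((laz_summable0 hα hγ hβ₂ hαβ hγ1 x).of_norm) 0
        (fun i _ => mul_nonneg (lazB_pos hα hγ hβ₂ i).le (pow_nonneg hx i))

lemma lazG_zero : lazG α γ β₂ 0 = 1 := by
  unfold lazG
  rw [tsum_eq_single 0 (fun n hn => by rw [zero_pow hn, mul_zero])]
  simp [lazB, lazC, lazPk]

include hα hγ hβ₂ in
lemma lazG1_nonneg {x : ℝ} (hx : 0 ≤ x) : 0 ≤ lazG1 α γ β₂ x :=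
  tsum_nonneg (fun k => by
    have := lazB_pos hα hγ hβ₂ (k+1)
    positivity)

include hα hγ hβ₂ hαβ hγ1 in
lemma laz_turan {x : ℝ} (hx : 0 ≤ x) :
    lazG α γ β₂ x * lazG2 α γ β₂ x ≤ lazG1 α γ β₂ x * lazG1 α γ β₂ x := by
  have hf0 := laz_summable0 hα hγ hβ₂ hαβ hγ1 x
  have hf1 := laz_summable1 hα hγ hβ₂ hαβ hγ1 x
  have hf2 := laz_summable2 hα hγ hβ₂ hαβ hγ1 x
  have hL := tsum_mul_tsum_eq_tsum_sum_antidiagonal_of_summable_norm hf0 hf2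
  have hR := tsum_mul_tsum_eq_tsum_sum_antidiagonal_of_summable_norm hf1 hf1
  unfold lazG lazG2 lazG1
  rw [hL, hR]
  refine Summable.tsum_le_tsum (fun N => ?_)
    ((summable_norm_sum_mul_antidiagonal_of_summable_norm hf0 hf2).of_norm)
    ((summable_norm_sum_mul_antidiagonal_of_summable_norm hf1 hf1).of_norm)
  have e1 : ∑ p ∈ antidiagonal N,
      (lazB α γ β₂ p.1 * x^p.1) * (((p.2:ℝ)+2)*((p.2:ℝ)+1) * lazB α γ β₂ (p.2+2) * x^p.2)
      = (∑ p ∈ antidiagonal N,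
          lazB α γ β₂ p.1 * (((p.2:ℝ)+2)*((p.2:ℝ)+1)* lazB α γ β₂ (p.2+2))) * x^N := by
    rw [Finset.sum_mul]
    refine Finset.sum_congr rfl fun p hp => ?_
    rw [← Finset.HasAntidiagonal.mem_antidiagonal.mp hp, pow_add]
    ring
  have e2 : ∑ p ∈ antidiagonal N,
      (((p.1:ℝ)+1) * lazB α γ β₂ (p.1+1) * x^p.1) * (((p.2:ℝ)+1) * lazB α γ β₂ (p.2+1) * x^p.2)
      = (∑ p ∈ antidiagonal N,
          (((p.1:ℝ)+1)* lazB α γ β₂ (p.1+1)) * (((p.2:ℝ)+1)* lazB α γ β₂ (p.2+1))) * x^N := by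
    rw [Finset.sum_mul]
    refine Finset.sum_congr rfl fun p hp => ?_
    rw [← Finset.HasAntidiagonal.mem_antidiagonal.mp hp, pow_add]
    ring
  rw [e1, e2]
  exact mul_le_mul_of_nonneg_right (laz_key_coeff hα hγ hβ₂ hαβ N) (pow_nonneg hx N)

include hα hγ hβ₂ hαβ hγ1 in
lemma laz_slope {z : ℝ} (hz : 0 < z) :
    z * lazG1 α γ β₂ z ≤ lazG α γ β₂ z * Real.log (lazG α γ β₂ z) := by
  have hgpos : ∀ x : ℝ, 0 ≤ x → 0 < lazG α γ β₂ x := fun x hx =>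
    lt_of_lt_of_le one_pos (lazG_one_le hα hγ hβ₂ hαβ hγ1 hx)
  set φ : ℝ → ℝ := fun x => lazG1 α γ β₂ x / lazG α γ β₂ x with hφ
  have hdφ : ∀ x : ℝ, 0 ≤ x → HasDerivAt φ
      ((lazG2 α γ β₂ x * lazG α γ β₂ x - lazG1 α γ β₂ x * lazG1 α γ β₂ x)
        / (lazG α γ β₂ x)^2) x := fun x hx =>
    (lazG1_hasDeriv hα hγ hβ₂ hαβ hγ1 x).div (lazG_hasDeriv hα hγ hβ₂ hαβ hγ1 x)
      (ne_of_gt (hgpos x hx))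
  have hanti : AntitoneOn φ (Set.Icc 0 z) := by
    refine antitoneOn_of_deriv_nonpos (convex_Icc 0 z)
      (fun x hx => ((hdφ x hx.1).continuousAt).continuousWithinAt) ?_ ?_
    · rw [interior_Icc]
      exact fun x hx => ((hdφ x hx.1.le).differentiableAt).differentiableWithinAt
    · rw [interior_Icc]
      intro x hx
      rw [(hdφ x hx.1.le).deriv]
      apply div_nonpos_of_nonpos_of_nonneg
      · have ht := laz_turan hα hγ hβ₂ hαβ hγ1 (le_of_lt hx.1)
        nlinarith
      · positivity
  set l : ℝ → ℝ := fun x => Real.log (lazG α γ β₂ x) with hl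
  have hdl : ∀ x ∈ Set.Ioo 0 z, HasDerivAt l (φ x) x := fun x hx =>
    (lazG_hasDeriv hα hγ hβ₂ hαβ hγ1 x).log (ne_of_gt (hgpos x hx.1.le))
  have hcontl : ContinuousOn l (Set.Icc 0 z) := fun x hx =>
    (((lazG_hasDeriv hα hγ hβ₂ hαβ hγ1 x).log (ne_of_gt (hgpos x hx.1))).continuousAt).continuousWithinAt
  obtain ⟨c, hc, hceq⟩ := exists_hasDerivAt_eq_slope l φ hz hcontl hdl
  have hl0 : l 0 = 0 := by
    simp only [hl, lazG_zero, Real.log_one]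
  rw [hl0, sub_zero, sub_zero] at hceq
  have hφzc : φ z ≤ φ c :=
    hanti ⟨hc.1.le, hc.2.le⟩ ⟨hz.le, le_refl z⟩ hc.2.le
  rw [hceq] at hφzc
  have hGz := hgpos z hz.le
  rw [hφ] at hφzc
  rw [div_le_div_iff₀ hGz hz] at hφzc
  linarith [hφzc]
end Turan

theorem lazarevic_1F2 (α β₁ β₂ : ℝ) (hα : 0 < α) (hβ₁ : 0 < β₁) (hβ₂ : 0 < β₂)
    (hαβ : β₂ ≤ α) (z : ℝ) (hz : 0 < z) :
    (∑' k : ℕ, (∏ i ∈ Finset.range k, (α + i)) * z ^ k /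
        ((∏ i ∈ Finset.range k, (β₁ + i)) * (∏ i ∈ Finset.range k, (β₂ + i)) *
          (k.factorial : ℝ))) ^ β₁ ≤
      (∑' k : ℕ, (∏ i ∈ Finset.range k, (α + i)) * z ^ k /
        ((∏ i ∈ Finset.range k, (β₁ + 1 + i)) * (∏ i ∈ Finset.range k, (β₂ + i)) *
          (k.factorial : ℝ))) ^ (β₁ + 1) := by
  have hγ : 0 < β₁ + 1 := by linarith
  have hγ1 : 1 ≤ β₁ + 1 := by linarith
  -- identify the two tsums
  have hfeq : (∑' k : ℕ, (∏ i ∈ Finset.range k, (α + i)) * z ^ k /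
        ((∏ i ∈ Finset.range k, (β₁ + i)) * (∏ i ∈ Finset.range k, (β₂ + i)) *
          (k.factorial : ℝ)))
      = ∑' k : ℕ, lazB α β₁ β₂ k * z^k := by
    refine tsum_congr (fun k => ?_)
    rw [lazB, lazC, div_div, div_mul_eq_mul_div]
    rfl
  have hgeq : (∑' k : ℕ, (∏ i ∈ Finset.range k, (α + i)) * z ^ k /
        ((∏ i ∈ Finset.range k, (β₁ + 1 + i)) * (∏ i ∈ Finset.range k, (β₂ + i)) *
          (k.factorial : ℝ)))
      = lazG α (β₁+1) β₂ z := by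
    refine tsum_congr (fun k => ?_)
    rw [lazB, lazC, div_div, div_mul_eq_mul_div]
    rfl
  rw [hfeq, hgeq]
  set g := lazG α (β₁+1) β₂ z with hgdef
  set G1 := lazG1 α (β₁+1) β₂ z with hG1def
  -- Pochhammer shift identity
  have hshift : ∀ k : ℕ, lazPk β₁ k * (β₁ + (k:ℝ)) = β₁ * lazPk (β₁+1) k := by
    intro k
    induction k with
    | zero => simp [lazPk]
    | succ n ih =>
      rw [lazPk_succ, lazPk_succ]
      push_cast
      linear_combination (β₁ + (n:ℝ) + 1) * ih
  -- coefficient relation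
  have haa : ∀ k : ℕ, lazB α β₁ β₂ k
      = lazB α (β₁+1) β₂ k + (1/β₁) * ((k:ℝ) * lazB α (β₁+1) β₂ k) := by
    intro k
    have hp1 : 0 < lazPk β₁ k := lazPk_pos hβ₁ k
    have hp2 : 0 < lazPk (β₁+1) k := lazPk_pos hγ k
    have hp3 : 0 < lazPk β₂ k := lazPk_pos hβ₂ k
    have hpα : 0 < lazPk α k := lazPk_pos hα k
    have hkf : (0:ℝ) < (k.factorial : ℝ) := by exact_mod_cast Nat.factorial_pos k
    have hbk : (0:ℝ) < β₁ + (k:ℝ) := by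
      have : (0:ℝ) ≤ (k:ℝ) := Nat.cast_nonneg k
      linarith
    unfold lazB lazC
    rw [div_div, div_div]
    field_simp
    linear_combination (-1) * hshift k
  -- summabilities
  have hs0 : Summable (fun k : ℕ => lazB α (β₁+1) β₂ k * z^k) :=
    (laz_summable0 hα hγ hβ₂ hαβ hγ1 z).of_norm
  have hsk : Summable (fun k : ℕ => (k:ℝ) * lazB α (β₁+1) β₂ k * z^k) := by
    rw [← summable_nat_add_iff 1]
    refine (((laz_summable1 hα hγ hβ₂ hαβ hγ1 z).of_norm).mul_left z).congr (fun n => ?_)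
    push_cast
    ring
  have hzG1 : ∑' k : ℕ, (k:ℝ) * lazB α (β₁+1) β₂ k * z^k = z * G1 := by
    rw [Summable.tsum_eq_zero_add hsk]
    rw [show ((0:ℕ):ℝ) * lazB α (β₁+1) β₂ 0 * z^(0:ℕ) = 0 by norm_num, zero_add]
    have hR : z * G1 = ∑' n : ℕ, z * (((n:ℝ)+1) * lazB α (β₁+1) β₂ (n+1) * z^n) := by
      rw [hG1def]
      exact tsum_mul_left.symm
    rw [hR]
    refine tsum_congr (fun n => ?_)
    push_cast
    ring
  have hf_split : ∑' k : ℕ, lazB α β₁ β₂ k * z^k = g + (1/β₁) * (z * G1) := by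
    calc ∑' k : ℕ, lazB α β₁ β₂ k * z^k
        = ∑' k : ℕ, (lazB α (β₁+1) β₂ k * z^k + (1/β₁) * ((k:ℝ) * lazB α (β₁+1) β₂ k * z^k)) := by
          refine tsum_congr (fun k => ?_)
          rw [haa k]; ring
      _ = (∑' k : ℕ, lazB α (β₁+1) β₂ k * z^k)
          + ∑' k : ℕ, (1/β₁) * ((k:ℝ) * lazB α (β₁+1) β₂ k * z^k) :=
          Summable.tsum_add hs0 (hsk.mul_left _)
      _ = g + (1/β₁) * (z * G1) := by
          rw [tsum_mul_left, hzG1]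
          rfl
  rw [hf_split]
  -- main chain
  have hg1 : 1 ≤ g := lazG_one_le hα hγ hβ₂ hαβ hγ1 hz.le
  have hgpos : 0 < g := lt_of_lt_of_le one_pos hg1
  have hG1nn : 0 ≤ G1 := lazG1_nonneg hα hγ hβ₂ hz.le
  have haux : (0:ℝ) ≤ (1/β₁) * (z * G1) := by positivity
  have hfpos : (0:ℝ) < g + (1/β₁) * (z * G1) := by linarith
  have hslope := laz_slope hα hγ hβ₂ hαβ hγ1 hz
  set f := g + (1/β₁) * (z * G1) with hfdef
  have hlog1 : Real.log f - Real.log g ≤ (f - g)/g := by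
    have h := Real.log_le_sub_one_of_pos (div_pos hfpos hgpos)
    rw [Real.log_div (ne_of_gt hfpos) (ne_of_gt hgpos)] at h
    have e : f/g - 1 = (f - g)/g := by field_simp
    rw [e] at h
    exact h
  have hfg : f - g = (1/β₁) * (z * G1) := by rw [hfdef]; ring
  have hkey : β₁ * (Real.log f - Real.log g) ≤ Real.log g := by
    have h1 : β₁ * (Real.log f - Real.log g) ≤ β₁ * ((f-g)/g) :=
      mul_le_mul_of_nonneg_left hlog1 hβ₁.le
    have h2 : β₁ * ((f-g)/g) = (z * G1)/g := by
      rw [hfg]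
      field_simp
    have h3 : (z*G1)/g ≤ Real.log g := by
      rw [div_le_iff₀ hgpos]
      calc z*G1 ≤ g * Real.log g := hslope
        _ = Real.log g * g := mul_comm _ _
    linarith
  rw [Real.rpow_def_of_pos hfpos, Real.rpow_def_of_pos hgpos]
  apply Real.exp_le_exp.mpr
  nlinarith [hkey]
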